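/- arXiv:1007.3539 — 5 statements merged into one kernel-verified Lean document; each statement's English description precedes it below -/
import Mathlib

section
/- Let v ∈ ℝ^n be non-increasing with non-negative entries summing to 1, with v_{n+1} := 0, and let r_j = ∑_{k=1}^j v_k. Then 1 + ∑_{j=2}^n v_j(r_j − j·v_j)/(r_j·r_{j−1}) ≤ ∑_{j=1}^n 1/j, provided r_{j-1} > 0 for all j ≥ 2. -/
/-- Harmonic bound: for a non-increasing non-negative unit-sum vector `v` with
prefix sums `r_j = ∑_{k=1}^j v_k` (all `r_{j-1} > 0` for `j ≥ 2`),
`1 + ∑_{j=2}^n v_j (r_j - j v_j) / (r_j r_{j-1}) ≤ ∑_{j=1}^n 1/j`. -/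
theorem harmonic_bound (n : ℕ) (v : ℕ → ℝ)
    (hmono : ∀ i k, 1 ≤ i → i ≤ k → k ≤ n → v k ≤ v i)
    (hnonneg : ∀ i, 1 ≤ i → i ≤ n → 0 ≤ v i)
    (hsum : ∑ i ∈ Finset.Icc 1 n, v i = 1)
    (hlast : v (n + 1) = 0)
    (hr : ∀ j, 2 ≤ j → j ≤ n → 0 < ∑ k ∈ Finset.Icc 1 (j - 1), v k) :
    1 + ∑ j ∈ Finset.Icc 2 n,
        v j * ((∑ k ∈ Finset.Icc 1 j, v k) - j * v j) /
          ((∑ k ∈ Finset.Icc 1 j, v k) * (∑ k ∈ Finset.Icc 1 (j - 1), v k)) ≤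
      ∑ j ∈ Finset.Icc 1 n, (1 : ℝ) / j := by
  rcases Nat.eq_zero_or_pos n with hn | hn
  · subst hn; simp at hsum
  -- split RHS
  have hsplit : ∑ j ∈ Finset.Icc 1 n, (1 : ℝ) / j
      = 1 + ∑ j ∈ Finset.Icc 2 n, (1 : ℝ) / j := by
    have : Finset.Icc 1 n = insert 1 (Finset.Icc 2 n) := by
      ext x
      simp [Finset.mem_Icc, Finset.mem_insert]
      omega
    rw [this, Finset.sum_insert (by simp)]
    norm_num
  rw [hsplit]
  refine add_le_add_right (Finset.sum_le_sum fun j hj => ?_) 1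
  rw [Finset.mem_Icc] at hj
  obtain ⟨hj2, hjn⟩ := hj
  set b := ∑ k ∈ Finset.Icc 1 (j - 1), v k with hb
  set a := ∑ k ∈ Finset.Icc 1 j, v k with ha
  have hbpos : 0 < b := hr j hj2 hjn
  have hvj : 0 ≤ v j := hnonneg j (by omega) hjn
  have hab : a = b + v j := by
    rw [ha, hb]
    have : j = (j - 1) + 1 := by omega
    rw [this, Finset.sum_Icc_succ_top (by omega)]
    congr 1 <;> omega
  have hapos : 0 < a := by rw [hab]; linarith
  have hjva : (j : ℝ) * v j ≤ a := by
    rw [ha]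
    have : (j : ℝ) * v j = ∑ k ∈ Finset.Icc 1 j, v j := by
      rw [Finset.sum_const, Nat.card_Icc]
      simp [mul_comm]
    rw [this]
    exact Finset.sum_le_sum fun k hk => by
      rw [Finset.mem_Icc] at hk
      exact hmono k j hk.1 hk.2 hjn
  have hjpos : (0 : ℝ) < j := by positivity
  rw [div_le_div_iff₀ (by positivity) hjpos]
  -- goal: v j * (a - j * v j) * j ≤ 1 * (a * b)
  have key : a - (j : ℝ) * v j ≤ b := by
    rw [hab]
    have : (1 : ℝ) ≤ (j : ℝ) := by exact_mod_cast Nat.one_le_iff_ne_zero.mpr (by omega)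
    nlinarith
  rcases le_or_gt (a - (j : ℝ) * v j) 0 with h | h
  · nlinarith
  · nlinarith [mul_le_mul hjva key h.le hapos.le]
end

section
/- For the multiplier vector v_j = (√j − √(j−1))/√n (j = 1,...,n), with prefix sums r_j = √j/√n, the quantity ∑_{j=2}^n v_j(r_j − j·v_j)/(r_j·r_{j−1}) is Ω(log n); concretely, there exists a constant c > 0 and N such that for all n ≥ N the sum is at least c·log n. -/
lemma harmonic_lower (n : ℕ) :
    Real.log ((n : ℝ) + 1) - Real.log 2 ≤ ∑ j ∈ Finset.Icc 2 n, (1 : ℝ) / j := by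
  induction n with
  | zero =>
    simp
    linarith [Real.log_nonneg (by norm_num : (1:ℝ) ≤ 2)]
  | succ n ih =>
    rcases Nat.lt_or_ge (n + 1) 2 with h | h
    · have hn0 : n = 0 := by omega
      subst hn0
      norm_num
    · rw [Finset.sum_Icc_succ_top h]
      have hn1 : (0:ℝ) < (n:ℝ) + 1 := by positivity
      have hlog : Real.log (((n:ℕ)+1+1 : ℝ)) - Real.log ((n:ℝ)+1) ≤ 1 / ((n:ℝ)+1) := by
        have := Real.log_le_sub_one_of_pos
          (show (0:ℝ) < ((n:ℝ)+1+1)/((n:ℝ)+1) by positivity)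
        rw [Real.log_div (by positivity) (by positivity)] at this
        have : Real.log ((n:ℝ)+1+1) - Real.log ((n:ℝ)+1) ≤ ((n:ℝ)+1+1)/((n:ℝ)+1) - 1 := this
        have heq : ((n:ℝ)+1+1)/((n:ℝ)+1) - 1 = 1 / ((n:ℝ)+1) := by field_simp; ring
        linarith [this, heq ▸ this]
      have := ih
      push_cast
      push_cast at hlog
      linarith

/-- For the multiplier vector `v_j = (√j - √(j-1))/√n` with prefix sums
`r_j = √j/√n`, the loss term `∑_{j=2}^n v_j (r_j - j v_j)/(r_j r_{j-1})` is
`Ω(log n)`: there are `c > 0` and `N` such that for all `n ≥ N` the sum is at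
least `c · log n`. -/
theorem sqrt_vector_loss_is_Omega_log :
    ∃ c : ℝ, 0 < c ∧ ∃ N : ℕ, ∀ n : ℕ, N ≤ n →
      c * Real.log n ≤
        ∑ j ∈ Finset.Icc 2 n,
          ((Real.sqrt j - Real.sqrt ((j : ℝ) - 1)) / Real.sqrt n) *
            (Real.sqrt j / Real.sqrt n -
              j * ((Real.sqrt j - Real.sqrt ((j : ℝ) - 1)) / Real.sqrt n)) /
            ((Real.sqrt j / Real.sqrt n) * (Real.sqrt ((j : ℝ) - 1) / Real.sqrt n)) := by
  refine ⟨1/8, by norm_num, 4, fun n hn => ?_⟩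
  have hn0 : (0:ℝ) < n := by positivity
  have hsn : (0:ℝ) < Real.sqrt n := Real.sqrt_pos.mpr hn0
  -- each term equals 1/(√j+√(j-1))² ≥ 1/(4j)
  have hterm : ∀ j ∈ Finset.Icc 2 n,
      (1:ℝ)/4 * (1 / j) ≤
        ((Real.sqrt j - Real.sqrt ((j : ℝ) - 1)) / Real.sqrt n) *
          (Real.sqrt j / Real.sqrt n -
            j * ((Real.sqrt j - Real.sqrt ((j : ℝ) - 1)) / Real.sqrt n)) /
          ((Real.sqrt j / Real.sqrt n) * (Real.sqrt ((j : ℝ) - 1) / Real.sqrt n)) := by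
    intro j hj
    simp only [Finset.mem_Icc] at hj
    obtain ⟨hj2, -⟩ := hj
    have hj2' : (2:ℝ) ≤ (j:ℝ) := by exact_mod_cast hj2
    set s := Real.sqrt j with hs
    set t := Real.sqrt ((j:ℝ) - 1) with ht
    have hs2 : s ^ 2 = (j:ℝ) := Real.sq_sqrt (by linarith)
    have ht2 : t ^ 2 = (j:ℝ) - 1 := Real.sq_sqrt (by linarith)
    have hspos : 0 < s := Real.sqrt_pos.mpr (by linarith)
    have htpos : 0 < t := Real.sqrt_pos.mpr (by linarith)
    have hts : t ≤ s := Real.sqrt_le_sqrt (by linarith)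
    have h1 : (s - t) * (s + t) = 1 := by linear_combination hs2 - ht2
    have hkey : (s - t) * (s - (j:ℝ) * (s - t)) * (s + t)^2 = s * t := by
      calc (s - t) * (s - (j:ℝ) * (s - t)) * (s + t)^2
          = ((s - t) * (s + t)) * (s^2 + s*t - (j:ℝ) * ((s - t) * (s + t))) := by ring
        _ = 1 * ((j:ℝ) + s*t - (j:ℝ) * 1) := by rw [h1, hs2]
        _ = s * t := by ring
    have heq : ((s - t) / Real.sqrt n) *
          (s / Real.sqrt n - j * ((s - t) / Real.sqrt n)) /
          ((s / Real.sqrt n) * (t / Real.sqrt n)) = 1 / (s + t)^2 := by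
      have hstep : ((s - t) / Real.sqrt n) *
          (s / Real.sqrt n - j * ((s - t) / Real.sqrt n)) /
          ((s / Real.sqrt n) * (t / Real.sqrt n))
          = (s - t) * (s - (j:ℝ) * (s - t)) / (s * t) := by
        field_simp
      rw [hstep, div_eq_div_iff (by positivity) (by positivity)]
      linear_combination hkey
    rw [heq]
    have h4j : (s + t)^2 ≤ 4 * j := by nlinarith
    have hrw : (1:ℝ)/4 * (1/j) = 1/(4*(j:ℝ)) := by ring
    rw [hrw, div_le_div_iff₀ (by positivity) (by positivity)]
    linarith
  have hsum : (1:ℝ)/4 * ∑ j ∈ Finset.Icc 2 n, (1:ℝ)/j ≤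
      ∑ j ∈ Finset.Icc 2 n,
        ((Real.sqrt j - Real.sqrt ((j : ℝ) - 1)) / Real.sqrt n) *
          (Real.sqrt j / Real.sqrt n -
            j * ((Real.sqrt j - Real.sqrt ((j : ℝ) - 1)) / Real.sqrt n)) /
          ((Real.sqrt j / Real.sqrt n) * (Real.sqrt ((j : ℝ) - 1) / Real.sqrt n)) := by
    rw [Finset.mul_sum]
    exact Finset.sum_le_sum hterm
  have hharm := harmonic_lower n
  have hlogn : Real.log ((n:ℝ)) ≤ Real.log ((n:ℝ) + 1) :=
    Real.log_le_log hn0 (by linarith)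
  have hlog4 : Real.log 4 ≤ Real.log n := by
    apply Real.log_le_log (by norm_num)
    exact_mod_cast hn
  have h42 : Real.log 4 = 2 * Real.log 2 := by
    rw [show (4:ℝ) = 2^2 by norm_num, Real.log_pow]; push_cast; ring
  have : (1:ℝ)/8 * Real.log n ≤ (1:ℝ)/4 * (Real.log ((n:ℝ)+1) - Real.log 2) := by
    nlinarith [hlogn, hlog4, h42]
  calc (1:ℝ)/8 * Real.log n ≤ (1:ℝ)/4 * (Real.log ((n:ℝ)+1) - Real.log 2) := this
    _ ≤ (1:ℝ)/4 * ∑ j ∈ Finset.Icc 2 n, (1:ℝ)/j := by linarith [hharm]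
    _ ≤ _ := hsum
end

section
/- Let v ∈ ℝ^n be a multiplier vector (non-increasing, non-negative, summing to 1), q > 0 a threshold, and b > 1. Suppose u ∈ ℝ^n satisfies: there is an index p < n such that (a) u_i ≥ v_i/b and u_i ≤ v_i for i ≤ p, (b) u is constant equal to (1 − ∑_{i≤p} u_i)/(n−p) on indices i > p, and (c) v_i < b/n for all i > p. Then for any non-increasing non-negative sequence g_1 ≥ ... ≥ g_n, ∑_i u_i·g_i ≥ (3/(4b))·∑_i v_i·g_i. -/
/-- Abstract floor lemma (Case 2): if `u` agrees with `v` up to a factor `b` on a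
prefix `1..p`, is constant equal to `(1 - ∑_{i≤p} u_i)/(n-p)` on the tail, and the
tail entries of `v` are below `b/n`, then for any non-increasing non-negative `g`,
`∑ u_i g_i ≥ (3/(4b)) ∑ v_i g_i`. -/
theorem floor_lemma (n p : ℕ) (b : ℝ) (v u g : ℕ → ℝ)
    (hb : 1 < b) (hp : p < n)
    (hvmono : ∀ i k, 1 ≤ i → i ≤ k → k ≤ n → v k ≤ v i)
    (hvnonneg : ∀ i, 1 ≤ i → i ≤ n → 0 ≤ v i)
    (hvsum : ∑ i ∈ Finset.Icc 1 n, v i = 1)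
    (hprefix : ∀ i, 1 ≤ i → i ≤ p → v i / b ≤ u i ∧ u i ≤ v i)
    (hconst : ∀ i, p < i → i ≤ n →
        u i = (1 - ∑ k ∈ Finset.Icc 1 p, u k) / ((n : ℝ) - p))
    (htail : ∀ i, p < i → i ≤ n → v i < b / n)
    (hgmono : ∀ i k, 1 ≤ i → i ≤ k → k ≤ n → g k ≤ g i)
    (hgnonneg : ∀ i, 1 ≤ i → i ≤ n → 0 ≤ g i) :
    (3 / (4 * b)) * ∑ i ∈ Finset.Icc 1 n, v i * g i ≤
      ∑ i ∈ Finset.Icc 1 n, u i * g i := by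
  have hb0 : (0:ℝ) < b := lt_trans one_pos hb
  have hpn : p ≤ n := hp.le
  have hn0 : 0 < n := Nat.lt_of_le_of_lt (Nat.zero_le p) hp
  have hn0R : (0:ℝ) < n := by exact_mod_cast hn0
  have hIcc : ∀ m : ℕ, Finset.Icc 1 m = Finset.Ioc 0 m := by
    intro m; ext x; simp [Nat.lt_iff_add_one_le]
  rw [hIcc] at hvsum ⊢
  have hsplit : ∀ f : ℕ → ℝ, ∑ i ∈ Finset.Ioc 0 p, f i + ∑ i ∈ Finset.Ioc p n, f i
      = ∑ i ∈ Finset.Ioc 0 n, f i :=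
    fun f => Finset.sum_Ioc_consecutive f (Nat.zero_le p) hpn
  set h := ∑ i ∈ Finset.Ioc 0 p, v i with hh
  set P := ∑ i ∈ Finset.Ioc 0 p, v i * g i with hPdef
  set T := ∑ i ∈ Finset.Ioc p n, v i * g i with hTdef
  have memA : ∀ i ∈ Finset.Ioc 0 p, 1 ≤ i ∧ i ≤ p := by
    intro i hi; rw [Finset.mem_Ioc] at hi; exact hi
  have memB : ∀ i ∈ Finset.Ioc p n, p < i ∧ i ≤ n := by
    intro i hi; rw [Finset.mem_Ioc] at hi; exact hi
  have hP0 : 0 ≤ P := by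
    apply Finset.sum_nonneg
    intro i hi
    obtain ⟨h1, h2⟩ := memA i hi
    exact mul_nonneg (hvnonneg i h1 (h2.trans hpn)) (hgnonneg i h1 (h2.trans hpn))
  have hT0 : 0 ≤ T := by
    apply Finset.sum_nonneg
    intro i hi
    obtain ⟨h1, h2⟩ := memB i hi
    have h1' : 1 ≤ i := Nat.one_le_of_lt (Nat.lt_of_le_of_lt (Nat.zero_le p) h1)
    exact mul_nonneg (hvnonneg i h1' h2) (hgnonneg i h1' h2)
  have htailv : ∑ i ∈ Finset.Ioc p n, v i = 1 - h := by
    have := hsplit v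
    rw [hvsum] at this
    linarith
  have hh1 : h ≤ 1 := by
    have h0 : 0 ≤ ∑ i ∈ Finset.Ioc p n, v i := by
      apply Finset.sum_nonneg
      intro i hi
      obtain ⟨h1, h2⟩ := memB i hi
      exact hvnonneg i (Nat.one_le_of_lt (Nat.lt_of_le_of_lt (Nat.zero_le p) h1)) h2
    rw [htailv] at h0
    linarith
  have h1h : (0:ℝ) ≤ 1 - h := by linarith
  -- sum of u on prefix is at most h
  have hSu : ∑ k ∈ Finset.Icc 1 p, u k ≤ h := by
    rw [hIcc, hh]
    apply Finset.sum_le_sum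
    intro i hi
    obtain ⟨h1, h2⟩ := memA i hi
    exact (hprefix i h1 h2).2
  -- tail bound on u
  have hun : ∀ i ∈ Finset.Ioc p n, (1 - h) / b * (v i * g i) ≤ u i * g i := by
    intro i hi
    obtain ⟨h1, h2⟩ := memB i hi
    have h1' : 1 ≤ i := Nat.one_le_of_lt (Nat.lt_of_le_of_lt (Nat.zero_le p) h1)
    have hg0 : 0 ≤ g i := hgnonneg i h1' h2
    have hd1 : (1:ℝ) ≤ (n:ℝ) - p := by
      have : (p:ℝ) + 1 ≤ (n:ℝ) := by exact_mod_cast hp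
      linarith
    have hd0 : (0:ℝ) < (n:ℝ) - p := lt_of_lt_of_le one_pos hd1
    have hdn : (n:ℝ) - p ≤ n := by
      have : (0:ℝ) ≤ p := Nat.cast_nonneg p
      linarith
    have hui : (1 - h) / b * v i ≤ u i := by
      rw [hconst i h1 h2]
      have e1 : (1 - h) / b * v i ≤ (1 - h) / n := by
        have t1 : (1 - h) / b * v i ≤ (1 - h) / b * (b / n) :=
          mul_le_mul_of_nonneg_left (htail i h1 h2).le (div_nonneg h1h hb0.le)
        have t2 : (1 - h) / b * (b / n) = (1 - h) / n := by
          field_simp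
        linarith [t1, t2.le]
      have e2 : (1 - h) / (n:ℝ) ≤ (1 - h) / ((n:ℝ) - p) := by
        gcongr
      have e3 : (1 - h) / ((n:ℝ) - p) ≤ (1 - ∑ k ∈ Finset.Icc 1 p, u k) / ((n:ℝ) - p) :=
        div_le_div_of_nonneg_right (by linarith) hd0.le
      exact le_trans e1 (le_trans e2 e3)
    calc (1 - h) / b * (v i * g i) = ((1 - h) / b * v i) * g i := by ring
      _ ≤ u i * g i := mul_le_mul_of_nonneg_right hui hg0
  -- key inequality
  have key : h * T ≤ (1 - h) * P := by
    rw [← htailv, hh, hTdef, hPdef]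
    rw [Finset.sum_mul_sum, Finset.sum_mul_sum]
    rw [Finset.sum_comm (s := Finset.Ioc p n) (t := Finset.Ioc 0 p)]
    apply Finset.sum_le_sum
    intro i hi
    apply Finset.sum_le_sum
    intro j hj
    obtain ⟨hi1, hi2⟩ := memA i hi
    obtain ⟨hj1, hj2⟩ := memB j hj
    have hgij : g j ≤ g i := hgmono i j hi1 (le_of_lt (lt_of_le_of_lt hi2 hj1)) hj2
    have hvi : 0 ≤ v i := hvnonneg i hi1 (hi2.trans hpn)
    have hvj : 0 ≤ v j := hvnonneg j (Nat.one_le_of_lt (Nat.lt_of_le_of_lt (Nat.zero_le p) hj1)) hj2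
    nlinarith [mul_le_mul_of_nonneg_left hgij (mul_nonneg hvi hvj)]
  -- prefix sum bound
  have hprefixsum : 1 / b * P ≤ ∑ i ∈ Finset.Ioc 0 p, u i * g i := by
    rw [hPdef, Finset.mul_sum]
    apply Finset.sum_le_sum
    intro i hi
    obtain ⟨h1, h2⟩ := memA i hi
    have hg0 : 0 ≤ g i := hgnonneg i h1 (h2.trans hpn)
    calc 1 / b * (v i * g i) = (v i / b) * g i := by ring
      _ ≤ u i * g i := mul_le_mul_of_nonneg_right (hprefix i h1 h2).1 hg0
  have htailsum : (1 - h) / b * T ≤ ∑ i ∈ Finset.Ioc p n, u i * g i := by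
    rw [hTdef, Finset.mul_sum]
    exact Finset.sum_le_sum hun
  have main : 3 / 4 * (P + T) ≤ P + (1 - h) * T := by
    nlinarith [key, hP0, hT0, mul_nonneg hT0 (sq_nonneg (2 * h - 1)), hh1]
  rw [← hsplit (fun i => v i * g i), ← hsplit (fun i => u i * g i), ← hPdef, ← hTdef]
  calc 3 / (4 * b) * (P + T) = (3 / 4 * (P + T)) / b := by ring
    _ ≤ (P + (1 - h) * T) / b := div_le_div_of_nonneg_right main hb0.le
    _ = 1 / b * P + (1 - h) / b * T := by ring
    _ ≤ _ := add_le_add hprefixsum htailsum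
end

section
/- Let v, u ∈ ℝ^n be non-increasing non-negative vectors. Suppose the staircases (maximal constant runs) of v and u satisfy: for each i < s (where s is the number of steps of u), the i-th step of u has the same height as the i-th step of v, the i-th step of v is at most a times as wide as the i-th step of u (a > 1), the first index of the i-th step of v is ≥ the first index of the i-th step of u, and u_i ≥ v_i on the last step of u. Then for any non-increasing non-negative sequence g_1 ≥ ... ≥ g_n, ∑_i u_i·g_i ≥ (1/a)·∑_i v_i·g_i. -/
open Finset

private lemma sum_steps (F : ℕ → ℝ) (Q : ℕ → ℕ) :
    ∀ s : ℕ, 1 ≤ s → (∀ i k, 1 ≤ i → i ≤ k → k ≤ s → Q i ≤ Q k) →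
    ∑ k ∈ Ico (Q 1) (Q s), F k =
      ∑ i ∈ Ico 1 s, ∑ k ∈ Ico (Q i) (Q (i + 1)), F k := by
  intro s
  induction s with
  | zero => omega
  | succ m ih =>
    intro _ hmono
    rcases Nat.lt_or_ge m 1 with hm | hm
    · interval_cases m
      simp
    · rw [← Finset.sum_Ico_consecutive F (hmono 1 m le_rfl hm (Nat.le_succ m))
        (hmono m (m + 1) hm (Nat.le_succ m) le_rfl),
        Finset.sum_Ico_succ_top hm,
        ih hm (fun i k h1 h2 h3 => hmono i k h1 h2 (h3.trans (Nat.le_succ m)))]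

private lemma g_block (n : ℕ) (a : ℝ) (g : ℕ → ℝ) (p p' r r' : ℕ)
    (ha : 1 < a) (hp1 : 1 ≤ p) (hpp : p < p') (hrr : r < r') (hpr : p ≤ r)
    (hr'n : r' ≤ n + 1) (hp'n : p' ≤ n + 1)
    (hw : (r' : ℝ) - r ≤ a * ((p' : ℝ) - p))
    (hgmono : ∀ i k, 1 ≤ i → i ≤ k → k ≤ n → g k ≤ g i)
    (hgnonneg : ∀ i, 1 ≤ i → i ≤ n → 0 ≤ g i) :
    ∑ k ∈ Ico r r', g k ≤ a * ∑ k ∈ Ico p p', g k := by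
  set wu := p' - p with hwu
  set wv := r' - r with hwv
  have hwu1 : 1 ≤ wu := by omega
  have hwv1 : 1 ≤ wv := by omega
  have h1 : ∑ k ∈ Ico r r', g k = ∑ j ∈ range wv, g (r + j) :=
    Finset.sum_Ico_eq_sum_range g r r'
  have h2 : ∑ k ∈ Ico p p', g k = ∑ j ∈ range wu, g (p + j) :=
    Finset.sum_Ico_eq_sum_range g p p'
  have hcastu : (wu : ℝ) = (p' : ℝ) - p := by
    rw [hwu]; push_cast [Nat.cast_sub hpp.le]; ring
  have hcastv : (wv : ℝ) = (r' : ℝ) - r := by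
    rw [hwv]; push_cast [Nat.cast_sub hrr.le]; ring
  have hw' : (wv : ℝ) ≤ a * wu := by rw [hcastu, hcastv]; exact hw
  have hshift : ∑ j ∈ range wv, g (r + j) ≤ ∑ j ∈ range wv, g (p + j) := by
    apply Finset.sum_le_sum
    intro j hj
    rw [Finset.mem_range] at hj
    exact hgmono (p + j) (r + j) (by omega) (by omega) (by omega)
  have hS0 : 0 ≤ ∑ j ∈ range wu, g (p + j) := by
    apply Finset.sum_nonneg
    intro j hj; rw [Finset.mem_range] at hj
    exact hgnonneg (p + j) (by omega) (by omega)
  rw [h1, h2]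
  rcases le_or_gt wv wu with hle | hlt
  · have hsub : ∑ j ∈ range wv, g (p + j) ≤ ∑ j ∈ range wu, g (p + j) := by
      apply Finset.sum_le_sum_of_subset_of_nonneg (Finset.range_subset_range.2 hle)
      intro j hj _
      rw [Finset.mem_range] at hj
      exact hgnonneg (p + j) (by omega) (by omega)
    nlinarith [hshift, hsub, hS0]
  · have hsplit : ∑ j ∈ range wv, g (p + j) =
        ∑ j ∈ range wu, g (p + j) + ∑ j ∈ Ico wu wv, g (p + j) := by
      rw [Finset.range_eq_Ico,
        ← Finset.sum_Ico_consecutive (fun j => g (p + j)) (Nat.zero_le wu) hlt.le,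
        ← Finset.range_eq_Ico]
    set c := g (p' - 1) with hc
    have hc0 : 0 ≤ c := hgnonneg (p' - 1) (by omega) (by omega)
    have htail : ∑ j ∈ Ico wu wv, g (p + j) ≤ ((wv - wu : ℕ) : ℝ) * c := by
      have hb : ∀ j ∈ Ico wu wv, g (p + j) ≤ c := by
        intro j hj
        rw [Finset.mem_Ico] at hj
        exact hgmono (p' - 1) (p + j) (by omega) (by omega) (by omega)
      have := Finset.sum_le_card_nsmul (Ico wu wv) (fun j => g (p + j)) c hb
      simpa [Nat.card_Ico, nsmul_eq_mul] using this
    have hblock : (wu : ℝ) * c ≤ ∑ j ∈ range wu, g (p + j) := by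
      have hb : ∀ j ∈ range wu, c ≤ g (p + j) := by
        intro j hj
        rw [Finset.mem_range] at hj
        exact hgmono (p + j) (p' - 1) (by omega) (by omega) (by omega)
      have := Finset.card_nsmul_le_sum (range wu) (fun j => g (p + j)) c hb
      simpa [Finset.card_range, nsmul_eq_mul] using this
    have hcast3 : ((wv - wu : ℕ) : ℝ) = (wv : ℝ) - wu := by
      push_cast [Nat.cast_sub hlt.le]; ring
    nlinarith [hshift, hsplit, htail, hblock, hc0, hS0, hw',
      mul_le_mul_of_nonneg_right hw' hc0]


/-- Core (horizontal fitting) lemma: `u` and `v` are non-increasing non-negative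
vectors whose staircases (maximal constant runs, with step-start indices `P` for
`u` and `R` for `v`, `s` resp. `t` steps) satisfy: for each `i < s` the `i`-th
steps have equal height, the `i`-th step of `v` is at most `a` times as wide as
that of `u`, the `i`-th step of `v` starts no earlier than that of `u`, and
`u ≥ v` pointwise on the last step of `u`. Then for any non-increasing
non-negative `g`, `∑ u_i g_i ≥ (1/a) ∑ v_i g_i`. -/
theorem core_lemma (n s t : ℕ) (a : ℝ) (u v g : ℕ → ℝ) (P R : ℕ → ℕ)
    (ha : 1 < a) (hs : 1 ≤ s) (hst : s ≤ t)
    (hP1 : P 1 = 1) (hPend : P (s + 1) = n + 1)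
    (hPmono : ∀ i k, 1 ≤ i → i < k → k ≤ s + 1 → P i < P k)
    (hR1 : R 1 = 1) (hRend : R (t + 1) = n + 1)
    (hRmono : ∀ i k, 1 ≤ i → i < k → k ≤ t + 1 → R i < R k)
    (huconst : ∀ i, 1 ≤ i → i ≤ s → ∀ k, P i ≤ k → k < P (i + 1) → u k = u (P i))
    (hvconst : ∀ i, 1 ≤ i → i ≤ t → ∀ k, R i ≤ k → k < R (i + 1) → v k = v (R i))
    (humax : ∀ i, 1 ≤ i → i < s → u (P (i + 1)) < u (P i))
    (hvmax : ∀ i, 1 ≤ i → i < t → v (R (i + 1)) < v (R i))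
    (hheight : ∀ i, 1 ≤ i → i < s → v (R i) = u (P i))
    (hwidth : ∀ i, 1 ≤ i → i < s →
        ((R (i + 1) : ℝ) - R i) ≤ a * ((P (i + 1) : ℝ) - P i))
    (hfirst : ∀ i, 1 ≤ i → i ≤ s → P i ≤ R i)
    (hlaststep : ∀ i, P s ≤ i → i ≤ n → v i ≤ u i)
    (humono : ∀ i k, 1 ≤ i → i ≤ k → k ≤ n → u k ≤ u i)
    (hunonneg : ∀ i, 1 ≤ i → i ≤ n → 0 ≤ u i)
    (hvmono : ∀ i k, 1 ≤ i → i ≤ k → k ≤ n → v k ≤ v i)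
    (hvnonneg : ∀ i, 1 ≤ i → i ≤ n → 0 ≤ v i)
    (hgmono : ∀ i k, 1 ≤ i → i ≤ k → k ≤ n → g k ≤ g i)
    (hgnonneg : ∀ i, 1 ≤ i → i ≤ n → 0 ≤ g i) :
    (1 / a) * ∑ i ∈ Finset.Icc 1 n, v i * g i ≤
      ∑ i ∈ Finset.Icc 1 n, u i * g i := by
  have ha0 : 0 < a := by linarith
  rw [one_div, inv_mul_le_iff₀ ha0]
  -- goal : ∑ v*g ≤ a * ∑ u*g
  have hPle : ∀ i k, 1 ≤ i → i ≤ k → k ≤ s + 1 → P i ≤ P k := by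
    intro i k h1 h2 h3
    rcases eq_or_lt_of_le h2 with h | h
    · rw [h]
    · exact (hPmono i k h1 h h3).le
  have hRle : ∀ i k, 1 ≤ i → i ≤ k → k ≤ t + 1 → R i ≤ R k := by
    intro i k h1 h2 h3
    rcases eq_or_lt_of_le h2 with h | h
    · rw [h]
    · exact (hRmono i k h1 h h3).le
  have hPlb : ∀ i, 1 ≤ i → i ≤ s + 1 → 1 ≤ P i := by
    intro i h1 h2; rw [← hP1]; exact hPle 1 i le_rfl h1 h2
  have hPub : ∀ i, 1 ≤ i → i ≤ s + 1 → P i ≤ n + 1 := by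
    intro i h1 h2; rw [← hPend]; exact hPle i (s + 1) h1 h2 le_rfl
  have hRlb : ∀ i, 1 ≤ i → i ≤ t + 1 → 1 ≤ R i := by
    intro i h1 h2; rw [← hR1]; exact hRle 1 i le_rfl h1 h2
  have hRub : ∀ i, 1 ≤ i → i ≤ t + 1 → R i ≤ n + 1 := by
    intro i h1 h2; rw [← hRend]; exact hRle i (t + 1) h1 h2 le_rfl
  have hIcc : Finset.Icc 1 n = Finset.Ico 1 (n + 1) := (Finset.Ico_add_one_right_eq_Icc 1 n).symm
  rw [hIcc]
  -- split v
  have hv_split : ∑ k ∈ Ico 1 (n + 1), v k * g k =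
      (∑ i ∈ Ico 1 s, ∑ k ∈ Ico (R i) (R (i + 1)), v k * g k) +
        ∑ k ∈ Ico (R s) (n + 1), v k * g k := by
    rw [← Finset.sum_Ico_consecutive (fun k => v k * g k)
        (show (1 : ℕ) ≤ R s by exact hRlb s hs (by omega))
        (hRub s hs (by omega))]
    congr 1
    have hsteps := sum_steps (fun k => v k * g k) R s hs
      (fun i k h1 h2 h3 => hRle i k h1 h2 (by omega))
    rw [hR1] at hsteps
    exact hsteps
  have hu_split : ∑ k ∈ Ico 1 (n + 1), u k * g k =
      (∑ i ∈ Ico 1 s, ∑ k ∈ Ico (P i) (P (i + 1)), u k * g k) +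
        ∑ k ∈ Ico (P s) (n + 1), u k * g k := by
    rw [← Finset.sum_Ico_consecutive (fun k => u k * g k)
        (show (1 : ℕ) ≤ P s by exact hPlb s hs (by omega))
        (hPub s hs (by omega))]
    congr 1
    have hsteps := sum_steps (fun k => u k * g k) P s hs
      (fun i k h1 h2 h3 => hPle i k h1 h2 (by omega))
    rw [hP1] at hsteps
    exact hsteps
  -- tail inequality
  have hPsRs : P s ≤ R s := hfirst s hs le_rfl
  have htail : ∑ k ∈ Ico (R s) (n + 1), v k * g k ≤
      ∑ k ∈ Ico (P s) (n + 1), u k * g k := by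
    calc ∑ k ∈ Ico (R s) (n + 1), v k * g k
        ≤ ∑ k ∈ Ico (R s) (n + 1), u k * g k := by
          apply Finset.sum_le_sum
          intro k hk
          rw [Finset.mem_Ico] at hk
          have h1k : 1 ≤ k := le_trans (hRlb s hs (by omega)) hk.1
          have hkn : k ≤ n := by omega
          exact mul_le_mul_of_nonneg_right
            (hlaststep k (le_trans hPsRs hk.1) hkn) (hgnonneg k h1k hkn)
      _ ≤ ∑ k ∈ Ico (P s) (n + 1), u k * g k := by
          apply Finset.sum_le_sum_of_subset_of_nonneg
            (Finset.Ico_subset_Ico hPsRs le_rfl)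
          intro k hk _
          rw [Finset.mem_Ico] at hk
          have h1k : 1 ≤ k := le_trans (hPlb s hs (by omega)) hk.1
          have hkn : k ≤ n := by omega
          exact mul_nonneg (hunonneg k h1k hkn) (hgnonneg k h1k hkn)
  -- head inequality
  have hhead : ∑ i ∈ Ico 1 s, ∑ k ∈ Ico (R i) (R (i + 1)), v k * g k ≤
      ∑ i ∈ Ico 1 s, a * ∑ k ∈ Ico (P i) (P (i + 1)), u k * g k := by
    apply Finset.sum_le_sum
    intro i hi
    rw [Finset.mem_Ico] at hi
    obtain ⟨hi1, his⟩ := hi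
    have hit : i ≤ t := by omega
    have hPi1 : 1 ≤ P i := hPlb i hi1 (by omega)
    have hPin : P i ≤ n := by
      have := hPmono i (s + 1) hi1 (by omega) le_rfl
      omega
    have hRin : R i ≤ n := by
      have := hRmono i (t + 1) hi1 (by omega) le_rfl
      omega
    have hPstep : P i < P (i + 1) := hPmono i (i + 1) hi1 (by omega) (by omega)
    have hRstep : R i < R (i + 1) := hRmono i (i + 1) hi1 (by omega) (by omega)
    have hP'ub : P (i + 1) ≤ n + 1 := hPub (i + 1) (by omega) (by omega)
    have hR'ub : R (i + 1) ≤ n + 1 := hRub (i + 1) (by omega) (by omega)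
    have hV : ∑ k ∈ Ico (R i) (R (i + 1)), v k * g k =
        v (R i) * ∑ k ∈ Ico (R i) (R (i + 1)), g k := by
      rw [Finset.mul_sum]
      apply Finset.sum_congr rfl
      intro k hk
      rw [Finset.mem_Ico] at hk
      rw [hvconst i hi1 hit k hk.1 hk.2]
    have hU : ∑ k ∈ Ico (P i) (P (i + 1)), u k * g k =
        u (P i) * ∑ k ∈ Ico (P i) (P (i + 1)), g k := by
      rw [Finset.mul_sum]
      apply Finset.sum_congr rfl
      intro k hk
      rw [Finset.mem_Ico] at hk
      rw [huconst i hi1 (by omega) k hk.1 hk.2]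
    rw [hV, hU, hheight i hi1 his]
    have hh0 : 0 ≤ u (P i) := hunonneg (P i) hPi1 hPin
    have hgb := g_block n a g (P i) (P (i + 1)) (R i) (R (i + 1)) ha hPi1
      hPstep hRstep (hfirst i hi1 (by omega)) hR'ub hP'ub
      (hwidth i hi1 his) hgmono hgnonneg
    calc u (P i) * ∑ k ∈ Ico (R i) (R (i + 1)), g k
        ≤ u (P i) * (a * ∑ k ∈ Ico (P i) (P (i + 1)), g k) :=
          mul_le_mul_of_nonneg_left hgb hh0
      _ = a * (u (P i) * ∑ k ∈ Ico (P i) (P (i + 1)), g k) := by ring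
  have htailu0 : 0 ≤ ∑ k ∈ Ico (P s) (n + 1), u k * g k := by
    apply Finset.sum_nonneg
    intro k hk
    rw [Finset.mem_Ico] at hk
    have h1k : 1 ≤ k := le_trans (hPlb s hs (by omega)) hk.1
    have hkn : k ≤ n := by omega
    exact mul_nonneg (hunonneg k h1k hkn) (hgnonneg k h1k hkn)
  rw [hv_split, hu_split]
  rw [← Finset.mul_sum] at hhead
  nlinarith [hhead, htail, htailu0]
end

section
/- Suppose for every multiplier vector v (non-increasing, non-negative, unit sum) there exists a vector u = φ(v) in a fixed finite set U and, for each u ∈ U, an allocation value vector g^u ∈ ℝ^n (non-increasing, non-negative) such that: (i) ⟨u, g^u⟩ ≥ α·sup_{g ∈ G} ⟨u, g⟩ over the set G of feasible sorted allocation value vectors, (ii) ⟨φ(v), g⟩ ≥ c·⟨v, g⟩ for every g ∈ G sorted non-increasingly, and (iii) v dominates φ(v). Then the allocation T ∈ {g^u : u ∈ U} maximizing ⟨v, T⟩ satisfies ⟨v, T⟩ ≥ α·c·sup_{g ∈ G} ⟨v, g⟩. -/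
/-- Domination lemma: if `v` and `u` have equal sums, `u ≤ v` before index `i0`
and `v ≤ u` from `i0` on, and `g` is antitone nonnegative, then
`⟨u, g⟩ ≤ ⟨v, g⟩`. -/
lemma dom_lemma {n : ℕ} (v u g : Fin n → ℝ) (hg : Antitone g) (hg0 : ∀ i, 0 ≤ g i)
    (hsum : ∑ i, v i = ∑ i, u i) (i0 : ℕ)
    (h1 : ∀ k : Fin n, (k : ℕ) < i0 → u k ≤ v k)
    (h2 : ∀ k : Fin n, i0 ≤ (k : ℕ) → v k ≤ u k) :
    ∑ i, u i * g i ≤ ∑ i, v i * g i := by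
  rcases lt_or_ge i0 n with h | h
  · set t := g ⟨i0, h⟩ with ht
    have key : ∀ i : Fin n, (v i - u i) * t ≤ (v i - u i) * g i := by
      intro i
      rcases lt_or_ge (i : ℕ) i0 with hi | hi
      · have hvu : 0 ≤ v i - u i := sub_nonneg.2 (h1 i hi)
        have : t ≤ g i := hg (by exact Fin.le_def.2 hi.le)
        nlinarith
      · have hvu : v i - u i ≤ 0 := sub_nonpos.2 (h2 i hi)
        have : g i ≤ t := hg (by exact Fin.le_def.2 hi)
        nlinarith
    have hsum0 : ∑ i, (v i - u i) = 0 := by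
      rw [Finset.sum_sub_distrib, hsum]; ring
    have : ∑ i : Fin n, (v i - u i) * t ≤ ∑ i : Fin n, (v i - u i) * g i :=
      Finset.sum_le_sum (fun i _ => key i)
    rw [← Finset.sum_mul, hsum0, zero_mul] at this
    have h' : 0 ≤ ∑ i, (v i * g i - u i * g i) := by
      calc (0:ℝ) ≤ ∑ i, (v i - u i) * g i := this
        _ = ∑ i, (v i * g i - u i * g i) := by
            apply Finset.sum_congr rfl; intro i _; ring
    rw [Finset.sum_sub_distrib] at h'
    linarith
  · apply Finset.sum_le_sum
    intro i _
    exact mul_le_mul_of_nonneg_right (h1 i (lt_of_lt_of_le i.isLt h)) (hg0 i)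

/-- Abstract maximal-in-range argument (Theorem 1): if every multiplier vector `v`
has a fitted vector `φ v` in the finite index set `U`, the black box `B` is
`α`-approximate on each `u ∈ U` over the feasible set `G` of sorted allocation
value vectors, fitting loses at most a factor `c`, and `v` dominates `φ v`, then
the allocation `T` maximizing `⟨v, ·⟩` over `{B u : u ∈ U}` is `α·c`-approximate
for `v`. -/
theorem maximal_in_range (n : ℕ) (G : Set (Fin n → ℝ)) (U : Finset (Fin n → ℝ))
    (φ B : (Fin n → ℝ) → (Fin n → ℝ)) (α c : ℝ) (v T : Fin n → ℝ)
    (hα0 : 0 < α) (hα1 : α ≤ 1) (hc0 : 0 < c) (hc1 : c ≤ 1)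
    (hG : ∀ g ∈ G, Antitone g ∧ ∀ i, 0 ≤ g i)
    (hv : Antitone v) (hv0 : ∀ i, 0 ≤ v i) (hvsum : ∑ i, v i = 1)
    (hφU : φ v ∈ U)
    (hφv : Antitone (φ v) ∧ (∀ i, 0 ≤ φ v i) ∧ ∑ i, φ v i = 1)
    (hBG : ∀ u ∈ U, B u ∈ G)
    (hApprox : ∀ u ∈ U, ∀ g ∈ G, α * ∑ i, u i * g i ≤ ∑ i, u i * B u i)
    (hFit : ∀ g ∈ G, c * ∑ i, v i * g i ≤ ∑ i, φ v i * g i)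
    (hDom : ∃ i0 : ℕ, (∀ k : Fin n, (k : ℕ) < i0 → φ v k ≤ v k) ∧
      (∀ k : Fin n, i0 ≤ (k : ℕ) → v k ≤ φ v k))
    (hT : ∃ u ∈ U, T = B u)
    (hTmax : ∀ u ∈ U, ∑ i, v i * B u i ≤ ∑ i, v i * T i) :
    ∀ g ∈ G, α * c * ∑ i, v i * g i ≤ ∑ i, v i * T i := by
  intro g hg
  obtain ⟨i0, hd1, hd2⟩ := hDom
  obtain ⟨hφanti, hφ0, hφsum⟩ := hφv
  have hBφ := hBG (φ v) hφU
  obtain ⟨hBanti, hB0⟩ := hG _ hBφ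
  have step1 : α * c * ∑ i, v i * g i ≤ α * ∑ i, φ v i * g i := by
    have := hFit g hg
    have := mul_le_mul_of_nonneg_left this hα0.le
    linarith [this]
  have step2 : α * ∑ i, φ v i * g i ≤ ∑ i, φ v i * B (φ v) i :=
    hApprox (φ v) hφU g hg
  have step3 : ∑ i, φ v i * B (φ v) i ≤ ∑ i, v i * B (φ v) i :=
    dom_lemma v (φ v) (B (φ v)) hBanti hB0 (by rw [hvsum, hφsum]) i0 hd1 hd2
  have step4 : ∑ i, v i * B (φ v) i ≤ ∑ i, v i * T i := hTmax (φ v) hφU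
  linarith
end
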